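/- The formal power series identity sum_{n>=0} (sum_{k=0}^{floor(n/3)} binomial(n-2k,k) C_{n-2k}) x^n = C(x + x^3) holds, where C(x) = sum_{m>=0} C_m x^m is the Catalan number generating function and C(x+x^3) denotes composition of formal power series. -/

import Mathlib

open PowerSeries

/-- The composition `C(X + X³)` of the Catalan generating function with `X + X³`,
defined coefficientwise: since `X + X³` has zero constant term, the coefficient of `xⁿ`
in `C(X + X³) = ∑_m C_m (X + X³)^m` only involves terms with `m ≤ n`. -/
noncomputable def catalanCompXaddX3 : PowerSeries ℚ :=
  PowerSeries.mk fun n =>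
    PowerSeries.coeff n
      (∑ m ∈ Finset.range (n + 1), (catalan m : ℚ) • (X + X ^ 3 : PowerSeries ℚ) ^ m)

lemma coeff_XaddX3_pow (n m : ℕ) :
    (PowerSeries.coeff n) ((X + X ^ 3 : PowerSeries ℚ) ^ m)
      = ∑ k ∈ Finset.range (m + 1), if m + 2 * k = n then (m.choose k : ℚ) else 0 := by
  rw [add_comm (X : PowerSeries ℚ), add_pow, map_sum]
  refine Finset.sum_congr rfl fun k hk => ?_
  rw [Finset.mem_range, Nat.lt_succ_iff] at hk
  have h1 : ((X ^ 3 : PowerSeries ℚ) ^ k * X ^ (m - k)) = X ^ (m + 2 * k) := by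
    rw [← pow_mul, ← pow_add]; congr 1; omega
  rw [mul_comm ((X ^ 3 : PowerSeries ℚ) ^ k * X ^ (m - k)) _, h1,
    ← map_natCast (C : ℚ →+* PowerSeries ℚ) (m.choose k), coeff_C_mul, coeff_X_pow]
  by_cases h : m + 2 * k = n
  · simp [h]
  · rw [if_neg (fun hh => h hh.symm), if_neg h, mul_zero]

/-- `∑_{n≥0} (∑_{k=0}^{⌊n/3⌋} binomial(n-2k,k) C_{n-2k}) xⁿ = C(x + x³)`. -/
theorem genfun_sum_eq_catalan_comp :
    (PowerSeries.mk fun n =>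
        ((∑ k ∈ Finset.range (n / 3 + 1),
          Nat.choose (n - 2 * k) k * catalan (n - 2 * k) : ℕ) : ℚ))
      = catalanCompXaddX3 := by
  unfold catalanCompXaddX3
  ext n
  rw [coeff_mk, coeff_mk, map_sum]
  have hterm : ∀ m ∈ Finset.range (n + 1),
      (PowerSeries.coeff n) ((catalan m : ℚ) • (X + X ^ 3 : PowerSeries ℚ) ^ m)
        = ∑ k ∈ Finset.range (m + 1),
            if m + 2 * k = n then (catalan m : ℚ) * (m.choose k : ℚ) else 0 := by
    intro m _
    rw [map_smul, smul_eq_mul, coeff_XaddX3_pow, Finset.mul_sum]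
    exact Finset.sum_congr rfl fun k _ => by split_ifs <;> simp
  rw [Finset.sum_congr rfl hterm, Finset.sum_sigma', ← Finset.sum_filter]
  push_cast
  refine Finset.sum_nbij' (fun k => (⟨n - 2 * k, k⟩ : (_ : ℕ) × ℕ)) (fun p => p.2)
    ?_ ?_ ?_ ?_ ?_
  · intro k hk
    rw [Finset.mem_range, Nat.lt_succ_iff] at hk
    simp only [Finset.mem_filter, Finset.mem_sigma, Finset.mem_range]
    omega
  · rintro ⟨a, b⟩ hp
    simp only [Finset.mem_filter, Finset.mem_sigma, Finset.mem_range] at hp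
    rw [Finset.mem_range]
    show b < n / 3 + 1
    omega
  · intro k _; rfl
  · rintro ⟨a, b⟩ hp
    simp only [Finset.mem_filter, Finset.mem_sigma, Finset.mem_range] at hp
    have : n - 2 * b = a := by omega
    simp [this]
  · intro k _
    rw [mul_comm]
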